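/- Let ρ : ℝⁿ → ℝ be smooth and strictly positive, R := (1/2)·log ρ, and let Σ : ℝⁿ → ℝⁿˣⁿ be a C² symmetric matrix field. Then (1/(4ρ))·Δ_Σ ρ = (1/2)·Δ_Σ R + (∇R)ᵀ Σ (∇R) + (1/4 − R/2)·⟨Hess, Σ⟩, where Δ_Σ f := Σ_{i,j} ∂²_{x_i x_j}(Σ_{ij} f) and ⟨Hess, Σ⟩ := Σ_{i,j} ∂²_{x_i x_j} Σ_{ij}. -/

import Mathlib

open Filter MeasureTheory

/-- Partial derivative in the `i`-th coordinate direction. -/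
noncomputable def pd {n : ℕ} {E : Type*} [NormedAddCommGroup E] [NormedSpace ℝ E]
    (i : Fin n) (f : (Fin n → ℝ) → E) (x : Fin n → ℝ) : E :=
  fderiv ℝ f x (Pi.single i 1)

/-- Second partial derivative ∂²_{x_i x_j}. -/
noncomputable def pd2 {n : ℕ} {E : Type*} [NormedAddCommGroup E] [NormedSpace ℝ E]
    (i j : Fin n) (f : (Fin n → ℝ) → E) (x : Fin n → ℝ) : E :=
  pd i (fun y => pd j f y) x

/-- Euclidean Laplacian. -/
noncomputable def lap {n : ℕ} {E : Type*} [NormedAddCommGroup E] [NormedSpace ℝ E]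
    (f : (Fin n → ℝ) → E) (x : Fin n → ℝ) : E :=
  ∑ i, pd2 i i f x

lemma contDiff_pd {n : ℕ} {f : (Fin n → ℝ) → ℝ} (hf : ContDiff ℝ 2 f) (j : Fin n) :
    ContDiff ℝ 1 (pd j f) := by
  have h1 : ContDiff ℝ 1 (fderiv ℝ f) := hf.fderiv_right (by norm_num)
  exact (ContinuousLinearMap.apply ℝ ℝ (Pi.single j 1 : Fin n → ℝ)).contDiff.comp h1

lemma pd_add {n : ℕ} {f g : (Fin n → ℝ) → ℝ} {x : Fin n → ℝ}
    (hf : DifferentiableAt ℝ f x) (hg : DifferentiableAt ℝ g x) (i : Fin n) :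
    pd i (fun y => f y + g y) x = pd i f x + pd i g x := by
  unfold pd; rw [fderiv_fun_add hf hg]; rfl

lemma pd_mul {n : ℕ} {f g : (Fin n → ℝ) → ℝ} {x : Fin n → ℝ}
    (hf : DifferentiableAt ℝ f x) (hg : DifferentiableAt ℝ g x) (i : Fin n) :
    pd i (fun y => f y * g y) x = pd i f x * g x + f x * pd i g x := by
  unfold pd; rw [fderiv_fun_mul hf hg]
  simp [ContinuousLinearMap.add_apply, ContinuousLinearMap.smul_apply]
  ring

lemma pd_const_mul {n : ℕ} {f : (Fin n → ℝ) → ℝ} {x : Fin n → ℝ}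
    (hf : DifferentiableAt ℝ f x) (c : ℝ) (i : Fin n) :
    pd i (fun y => c * f y) x = c * pd i f x := by
  unfold pd; rw [fderiv_const_mul hf]; rfl

lemma pd2_mul {n : ℕ} {f g : (Fin n → ℝ) → ℝ}
    (hf : ContDiff ℝ 2 f) (hg : ContDiff ℝ 2 g) (i j : Fin n) (x : Fin n → ℝ) :
    pd2 i j (fun y => f y * g y) x =
      pd2 i j f x * g x + pd j f x * pd i g x + pd i f x * pd j g x + f x * pd2 i j g x := by
  have hfd := hf.differentiable two_ne_zero
  have hgd := hg.differentiable two_ne_zero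
  have h1 : (fun y => pd j (fun z => f z * g z) y) =
      fun y => pd j f y * g y + f y * pd j g y := funext fun y => pd_mul (hfd y) (hgd y) j
  unfold pd2
  rw [h1]
  have hpf : DifferentiableAt ℝ (pd j f) x := ((contDiff_pd hf j).differentiable one_ne_zero) x
  have hpg : DifferentiableAt ℝ (pd j g) x := ((contDiff_pd hg j).differentiable one_ne_zero) x
  rw [pd_add (f := fun y => pd j f y * g y) (g := fun y => f y * pd j g y) ((hpf.mul (hgd x))) ((hfd x).mul hpg) i, pd_mul hpf (hgd x) i,
    pd_mul (hfd x) hpg i]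
  ring


theorem weighted_laplacian_of_half_log {n : ℕ} (ρ : (Fin n → ℝ) → ℝ)
    (hρ : ContDiff ℝ 2 ρ) (hpos : ∀ x, 0 < ρ x)
    (R : (Fin n → ℝ) → ℝ) (hR : R = fun x => (1/2) * Real.log (ρ x))
    (Sig : (Fin n → ℝ) → Matrix (Fin n) (Fin n) ℝ)
    (hSig : ∀ i j, ContDiff ℝ 2 (fun x => Sig x i j))
    (hsymm : ∀ x, (Sig x).IsSymm) :
    ∀ x,
      (1 / (4 * ρ x)) * (∑ i, ∑ j, pd2 i j (fun y => Sig y i j * ρ y) x) =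
        (1/2) * (∑ i, ∑ j, pd2 i j (fun y => Sig y i j * R y) x) +
        (∑ i, ∑ j, pd i R x * Sig x i j * pd j R x) +
        (1/4 - R x / 2) * (∑ i, ∑ j, pd2 i j (fun y => Sig y i j) x) := by
  intro x
  -- R is C²
  have hRc : ContDiff ℝ 2 R := by
    have h := (hρ.log (fun y => (hpos y).ne')).const_smul (1/2 : ℝ)
    rw [hR]
    simpa [smul_eq_mul] using h
  have hRd := hRc.differentiable two_ne_zero
  -- ρ = exp (2 R)
  have hρeq : (fun z => Real.exp (2 * R z)) = ρ := by
    funext z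
    rw [hR]
    have : 2 * ((1:ℝ)/2 * Real.log (ρ z)) = Real.log (ρ z) := by ring
    rw [this, Real.exp_log (hpos z)]
  -- first derivative of ρ in terms of R
  have hpdρ : ∀ (j : Fin n) (y : Fin n → ℝ), pd j ρ y = 2 * pd j R y * ρ y := by
    intro j y
    have h : HasFDerivAt (fun z => Real.exp (2 * R z))
        (Real.exp (2 * R y) • ((2:ℝ) • fderiv ℝ R y)) y :=
      (((hRd y).hasFDerivAt).const_mul (2:ℝ)).exp
    rw [hρeq] at h
    have hy : Real.exp (2 * R y) = ρ y := congrFun hρeq y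
    unfold pd
    rw [h.fderiv]
    simp [hy, pd]
    ring
  -- second derivative of ρ in terms of R
  have hpd2ρ : ∀ (i j : Fin n), pd2 i j ρ x =
      2 * pd2 i j R x * ρ x + 4 * pd i R x * pd j R x * ρ x := by
    intro i j
    have h1 : (fun y => pd j ρ y) = fun y => (2 * pd j R y) * ρ y :=
      funext fun y => hpdρ j y
    unfold pd2
    rw [h1]
    have hpjR : DifferentiableAt ℝ (pd j R) x := ((contDiff_pd hRc j).differentiable one_ne_zero) x
    have hd2 : DifferentiableAt ℝ (fun y => 2 * pd j R y) x := hpjR.const_mul 2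
    rw [pd_mul hd2 ((hρ.differentiable two_ne_zero) x) i, pd_const_mul hpjR 2 i]
    rw [hpdρ i x]
    ring
  -- the per-term identity
  have key : ∀ i j : Fin n,
      (1 / (4 * ρ x)) * pd2 i j (fun y => Sig y i j * ρ y) x =
        (1/2) * pd2 i j (fun y => Sig y i j * R y) x +
        pd i R x * Sig x i j * pd j R x +
        (1/4 - R x / 2) * pd2 i j (fun y => Sig y i j) x := by
    intro i j
    have hs := hSig i j
    rw [pd2_mul hs hρ i j x, pd2_mul hs hRc i j x, hpd2ρ i j, hpdρ i x, hpdρ j x]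
    have hRx : R x = 1/2 * Real.log (ρ x) := by rw [hR]
    have hp : ρ x ≠ 0 := (hpos x).ne'
    field_simp
    ring
  simp only [Finset.mul_sum, ← Finset.sum_add_distrib]
  exact Finset.sum_congr rfl fun i _ => Finset.sum_congr rfl fun j _ => key i j
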